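/- Let n and t be positive integers with n even and n ≥ 6t−2. Define e_i = C(n/2, t−i)·C(n/2, t+i) for i ∈ {0,…,t}. Then e_i > e_{i+1} + t for each i ∈ {0,…,t−1}. -/
import Mathlib

-- monotonicity of choose in k up to symmetry
lemma aux_mono_half (m : ℕ) : ∀ k j, j ≤ k → 2*k ≤ m → m.choose j ≤ m.choose k := by
  intro k
  induction k with
  | zero => intro j h _; interval_cases j; rfl
  | succ k ih =>
    intro j h hm
    rcases Nat.lt_or_ge j (k+1) with h' | h'
    · have h1 : m.choose j ≤ m.choose k := ih j (by omega) (by omega)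
      refine h1.trans (Nat.choose_le_succ_of_lt_half_left ?_)
      omega
    · have : j = k+1 := by omega
      simp [this]

lemma aux_mono (m j k : ℕ) (h1 : j ≤ k) (h2 : j + k ≤ m) : m.choose j ≤ m.choose k := by
  rcases Nat.lt_or_ge m (2*k) with h | h
  · have hk : k ≤ m := by omega
    rw [← Nat.choose_symm hk]
    exact aux_mono_half m (m-k) j (by omega) (by omega)
  · exact aux_mono_half m k j h1 h

lemma aux_bnd (m t : ℕ) (ht : 1 ≤ t) (hm : 3*t ≤ m+1) :
    t*(t+1)^2 ≤ (m+1) * m.choose t := by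
  rcases Nat.lt_or_ge t 2 with h | h
  · have : t = 1 := by omega
    subst this
    simp [Nat.choose_one_right]
    nlinarith
  · have h2 : m.choose 2 ≤ m.choose t := aux_mono m 2 t h (by omega)
    have h3 : m.choose 2 * 2 = m * (m-1) := by
      have := Nat.choose_succ_right_eq m 1
      simpa [Nat.choose_one_right] using this
    obtain ⟨m', rfl⟩ : ∃ m', m = m' + 1 := ⟨m-1, by omega⟩
    obtain ⟨s, rfl⟩ : ∃ s, t = s + 2 := ⟨t-2, by omega⟩
    obtain ⟨c, rfl⟩ : ∃ c, m' = 3*s + 4 + c := ⟨m'-(3*s+4), by omega⟩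
    have key : 2 * ((s+2)*((s+2)+1)^2) ≤ ((3*s+4+c)+2) * (((3*s+4+c)+1) * (3*s+4+c)) := by
      have h1 : 2 * ((s+2)*((s+2)+1)^2) = 2*s^3+16*s^2+42*s+36 := by ring
      have h2 : ((3*s+4+c)+2) * (((3*s+4+c)+1) * (3*s+4+c)) =
          27*s^3+135*s^2+222*s+120 + c*(27*s^2+90*s+74) + c^2*(9*s+15) + c^3 := by ring
      rw [h1, h2]
      have := Nat.zero_le (c*(27*s^2+90*s+74) + c^2*(9*s+15) + c^3)
      nlinarith [Nat.zero_le (s^3), Nat.zero_le (s^2), Nat.zero_le s]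
    set t := s + 2 with htdef
    set m' := 3*s+4+c with hmdef
    calc t*(t+1)^2 ≤ (m'+2) * (m'+1).choose 2 := by
          have h4 : 2*(t*(t+1)^2) ≤ (m'+2) * (m'+1).choose 2 * 2 := by
            calc 2*(t*(t+1)^2) ≤ (m'+2)*((m'+1)*m') := key
              _ = (m'+2) * ((m'+1).choose 2 * 2) := by rw [h3]; simp
              _ = (m'+2) * (m'+1).choose 2 * 2 := by ring
          omega
      _ ≤ (m'+2) * (m'+1).choose t := Nat.mul_le_mul_left _ h2

lemma aux_key (m a i c : ℕ) (hc : m = 3*a+3*i+2+c) :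
    m.choose a * m.choose (a+2*i+2) + (a+i+1) < m.choose (a+1) * m.choose (a+2*i+1) := by
  have hA : m.choose (a+1) * (a+1) = m.choose a * (m - a) := Nat.choose_succ_right_eq m a
  have hB : m.choose (a+2*i+2) * (a+2*i+2) = m.choose (a+2*i+1) * (m - (a+2*i+1)) := by
    simpa [show a+2*i+1+1 = a+2*i+2 by ring] using Nat.choose_succ_right_eq m (a+2*i+1)
  have hma : m - a = 2*a+3*i+2+c := by omega
  have hmk : m - (a+2*i+1) = 2*a+i+1+c := by omega
  rw [hma] at hA
  rw [hmk] at hB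
  set e1 := m.choose a * m.choose (a+2*i+2) with he1
  set e0 := m.choose (a+1) * m.choose (a+2*i+1) with he0
  -- cross identity: e0 * D = e1 * ((m-a)*(k+1)) where D = (a+1)*(m-k)
  have hcross : e0 * ((a+1)*(2*a+i+1+c)) = e1 * ((2*a+3*i+2+c)*(a+2*i+2)) := by
    calc e0 * ((a+1)*(2*a+i+1+c))
        = (m.choose (a+1) * (a+1)) * (m.choose (a+2*i+1) * (2*a+i+1+c)) := by
          rw [he0]; ring
      _ = (m.choose a * (2*a+3*i+2+c)) * (m.choose (a+2*i+2) * (a+2*i+2)) := by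
          rw [hA, ← hB]
      _ = e1 * ((2*a+3*i+2+c)*(a+2*i+2)) := by rw [he1]; ring
  -- bounds
  have h5 : m.choose (a+i+1) ≤ m.choose (a+2*i+1) := aux_mono m _ _ (by omega) (by omega)
  have h6 : (a+i+1)*((a+i+1)+1)^2 ≤ (m+1) * m.choose (a+i+1) :=
    aux_bnd m (a+i+1) (by omega) (by omega)
  have h7 : 1 ≤ m.choose a := Nat.choose_pos (by omega)
  -- key inequality times (a+2i+2)
  have hkey2 : (a+i+2) * ((a+1)*(2*a+i+1+c)) * (a+2*i+2)
      ≤ e1 * ((2*i+1)*(m+1)) * (a+2*i+2) := by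
    have hr : e1 * ((2*i+1)*(m+1)) * (a+2*i+2)
        = (m.choose a * ((2*i+1)*(m+1))) * (m.choose (a+2*i+1) * (2*a+i+1+c)) := by
      rw [he1]
      calc m.choose a * m.choose (a+2*i+2) * ((2*i+1)*(m+1)) * (a+2*i+2)
          = (m.choose a * ((2*i+1)*(m+1))) * (m.choose (a+2*i+2) * (a+2*i+2)) := by ring
        _ = _ := by rw [hB]
    rw [hr]
    have step1 : (a+i+2) * ((a+1)*(2*a+i+1+c)) * (a+2*i+2)
        ≤ ((a+i+1)*((a+i+1)+1)^2) * (2*a+i+1+c) := by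
      have : (a+1)*(a+2*i+2) ≤ (a+i+1)*(a+i+2) := by nlinarith [Nat.zero_le (i*i)]
      calc (a+i+2) * ((a+1)*(2*a+i+1+c)) * (a+2*i+2)
          = ((a+1)*(a+2*i+2)) * ((a+i+2)*(2*a+i+1+c)) := by ring
        _ ≤ ((a+i+1)*(a+i+2)) * ((a+i+2)*(2*a+i+1+c)) := Nat.mul_le_mul_right _ this
        _ = ((a+i+1)*((a+i+1)+1)^2) * (2*a+i+1+c) := by ring
    refine step1.trans ?_
    calc ((a+i+1)*((a+i+1)+1)^2) * (2*a+i+1+c)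
        ≤ ((m+1) * m.choose (a+i+1)) * (2*a+i+1+c) := Nat.mul_le_mul_right _ h6
      _ ≤ ((m+1) * m.choose (a+2*i+1)) * (2*a+i+1+c) := by
          exact Nat.mul_le_mul_right _ (Nat.mul_le_mul_left _ h5)
      _ ≤ (m.choose a * ((2*i+1)*(m+1))) * (m.choose (a+2*i+1) * (2*a+i+1+c)) := by
          have : (m+1) * m.choose (a+2*i+1) * (2*a+i+1+c)
              ≤ (m.choose a * (2*i+1)) * ((m+1) * m.choose (a+2*i+1) * (2*a+i+1+c)) :=
            Nat.le_mul_of_pos_left _ (by positivity)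
          calc (m+1) * m.choose (a+2*i+1) * (2*a+i+1+c)
              ≤ (m.choose a * (2*i+1)) * ((m+1) * m.choose (a+2*i+1) * (2*a+i+1+c)) := this
            _ = (m.choose a * ((2*i+1)*(m+1))) * (m.choose (a+2*i+1) * (2*a+i+1+c)) := by ring
  have hkey : (a+i+2) * ((a+1)*(2*a+i+1+c)) ≤ e1 * ((2*i+1)*(m+1)) :=
    Nat.le_of_mul_le_mul_right hkey2 (by omega)
  -- conclude
  have hD : 0 < (a+1)*(2*a+i+1+c) := by positivity
  have hNd : (2*a+3*i+2+c)*(a+2*i+2) = (2*i+1)*(m+1) + (a+1)*(2*a+i+1+c) := by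
    subst hc; ring
  refine Nat.lt_of_mul_lt_mul_right (a := (a+1)*(2*a+i+1+c)) ?_
  calc (e1 + (a+i+1)) * ((a+1)*(2*a+i+1+c))
      = e1 * ((a+1)*(2*a+i+1+c)) + (a+i+1) * ((a+1)*(2*a+i+1+c)) := by ring
    _ < e1 * ((a+1)*(2*a+i+1+c)) + (a+i+2) * ((a+1)*(2*a+i+1+c)) := by
        have : (a+i+1) * ((a+1)*(2*a+i+1+c)) < (a+i+2) * ((a+1)*(2*a+i+1+c)) :=
          (Nat.mul_lt_mul_right hD).mpr (by omega)
        omega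
    _ ≤ e1 * ((a+1)*(2*a+i+1+c)) + e1 * ((2*i+1)*(m+1)) := by
        have := hkey; omega
    _ = e1 * ((2*a+3*i+2+c)*(a+2*i+2)) := by rw [hNd]; ring
    _ = e0 * ((a+1)*(2*a+i+1+c)) := hcross.symm

theorem stmt_0 (n t : ℕ) (hn : 0 < n) (ht : 0 < t) (hev : Even n)
    (hnt : 6 * t - 2 ≤ n) (i : ℕ) (hi : i < t) :
    (n / 2).choose (t - (i + 1)) * (n / 2).choose (t + (i + 1)) + t
      < (n / 2).choose (t - i) * (n / 2).choose (t + i) := by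
  obtain ⟨r, hr⟩ := hev
  have hm : n / 2 = r := by omega
  obtain ⟨a, ha⟩ : ∃ a, t = a + i + 1 := ⟨t - i - 1, by omega⟩
  obtain ⟨c, hc⟩ : ∃ c, r = 3*a+3*i+2+c := ⟨r - (3*a+3*i+2), by omega⟩
  rw [hm, show t - (i+1) = a by omega, show t + (i+1) = a+2*i+2 by omega,
    show t - i = a+1 by omega, show t + i = a+2*i+1 by omega,
    show t = a+i+1 by omega]
  exact aux_key r a i c hc
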